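/- arXiv:2006.09903 — 2 statements merged into one kernel-verified Lean document; each statement's English description precedes it below -/
import Mathlib

section
/- For all j_c > 0, γ > 0, every e ∈ ℝ³ with e ≠ 0, and every v ∈ ℝ³, the quadratic form of ψ_γ(e) satisfies the two-sided bound 0 ≤ ψ_γ(e) v · v ≤ 2 j_c γ |v|² / max_γ{1, γ|e|}. -/
open scoped RealInnerProductSpace Topology

/-- Moreau-Yosida regularization of the max-function `x ↦ max{1, x}`. -/
noncomputable def maxReg (γ x : ℝ) : ℝ :=
  if 1 / (2 * γ) ≤ x - 1 then x
  else if x - 1 ≤ -(1 / (2 * γ)) then 1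
  else 1 + γ / 2 * (x - 1 + 1 / (2 * γ)) ^ 2

abbrev E3 := EuclideanSpace ℝ (Fin 3)

/-- The regularized dual-variable map `Λ_γ(e) = j_c γ e / max_γ{1, γ|e|}`. -/
noncomputable def Lam (jc γ : ℝ) (e : E3) : E3 :=
  (jc * γ / maxReg γ (γ * ‖e‖)) • e

/-- The coefficient `c_γ(e)` arising in the derivative of `Λ_γ`. -/
noncomputable def cReg (γ : ℝ) (e : E3) : ℝ :=
  if 1 + 1 / (2 * γ) ≤ γ * ‖e‖ then 1
  else if |γ * ‖e‖ - 1| < 1 / (2 * γ) then γ * (γ * ‖e‖ - 1 + 1 / (2 * γ))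
  else 0

/-- The matrix `ψ_γ(e)` applied to a vector `v`, where `(e ⊗ Λ_γ(e)) v = (Λ_γ(e) ⬝ v) e`. -/
noncomputable def psi (jc γ : ℝ) (e v : E3) : E3 :=
  (jc * γ / maxReg γ (γ * ‖e‖)) • v
    - ((γ * cReg γ e / (maxReg γ (γ * ‖e‖) * ‖e‖)) * ⟪Lam jc γ e, v⟫) • e

lemma maxReg_ge_one (γ x : ℝ) (hγ : 0 < γ) : 1 ≤ maxReg γ x := by
  unfold maxReg
  have h2γ : 0 < 1 / (2 * γ) := by positivity
  split_ifs with h1 h2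
  · linarith
  · exact le_refl 1
  · nlinarith [sq_nonneg (x - 1 + 1 / (2 * γ))]

lemma cReg_nonneg (γ : ℝ) (e : E3) (hγ : 0 < γ) : 0 ≤ cReg γ e := by
  unfold cReg
  split_ifs with h1 h2
  · norm_num
  · have := abs_lt.mp h2
    nlinarith [this.1]
  · exact le_refl 0

lemma key_ineq (γ : ℝ) (e : E3) (hγ : 0 < γ) :
    γ * cReg γ e * ‖e‖ ≤ maxReg γ (γ * ‖e‖) := by
  have hm1 := maxReg_ge_one γ (γ * ‖e‖) hγ
  set x := γ * ‖e‖ with hx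
  have hγ' : γ ≠ 0 := ne_of_gt hγ
  have hne : ‖e‖ = x / γ := by field_simp [hx]; rw [hx]; ring
  have h2γ : 0 < 1 / (2 * γ) := by positivity
  by_cases h1 : 1 + 1 / (2 * γ) ≤ x
  · rw [cReg, if_pos h1, maxReg, if_pos (by linarith : 1 / (2 * γ) ≤ x - 1)]
    have hL : γ * 1 * ‖e‖ = x := by rw [hx]; ring
    rw [hL]
  · by_cases h2 : |x - 1| < 1 / (2 * γ)
    · have hab := abs_lt.mp h2
      rw [cReg, if_neg h1, if_pos h2, maxReg,
        if_neg (by linarith [hab.2] : ¬ 1 / (2 * γ) ≤ x - 1),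
        if_neg (by linarith [hab.1] : ¬ x - 1 ≤ -(1 / (2 * γ)))]
      set t := x - 1 + 1 / (2 * γ) with ht
      have ht0 : 0 < t := by simp only [ht]; linarith [hab.1]
      have ht1 : γ * t < 1 := by
        have h2' : 1 / (2 * γ) + 1 / (2 * γ) = 1 / γ := by ring
        have : t < 1 / γ := by simp only [ht]; linarith [hab.2]
        calc γ * t < γ * (1 / γ) := mul_lt_mul_of_pos_left this hγ
          _ = 1 := by field_simp
      have hL : γ * (γ * (x - 1 + 1 / (2 * γ))) * ‖e‖ = γ * t * x := by
        rw [ht, hx]; ring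
      rw [hL]
      have hx1 : x = 1 + t - 1 / (2 * γ) := by simp only [ht]; ring
      rw [hx1]
      have hhalf : γ * t * (1 / (2 * γ)) = t / 2 := by field_simp
      nlinarith [mul_pos (sub_pos.mpr ht1) (by linarith : (0:ℝ) < t / 2 + 1)]
    · rw [cReg, if_neg h1, if_neg h2]
      have hn0 : 0 ≤ ‖e‖ := norm_nonneg e
      nlinarith

/-- Two-sided bound for the quadratic form of `ψ_γ(e)`:
`0 ≤ ψ_γ(e) v ⬝ v ≤ 2 j_c γ ‖v‖² / max_γ{1, γ‖e‖}` for e ≠ 0. -/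
theorem psi_quadratic_form_bounds (jc γ : ℝ) (hjc : 0 < jc) (hγ : 0 < γ) (e : E3)
    (he : e ≠ 0) (v : E3) :
    0 ≤ ⟪psi jc γ e v, v⟫ ∧
    ⟪psi jc γ e v, v⟫ ≤ 2 * jc * γ * ‖v‖ ^ 2 / maxReg γ (γ * ‖e‖) := by
  set m := maxReg γ (γ * ‖e‖) with hm
  set c := cReg γ e with hc
  set n := ‖e‖ with hn
  set t := (⟪e, v⟫ : ℝ) with htdef
  have hm1 : 1 ≤ m := maxReg_ge_one γ (γ * ‖e‖) hγ
  have hm0 : 0 < m := lt_of_lt_of_le one_pos hm1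
  have hc0 : 0 ≤ c := cReg_nonneg γ e hγ
  have hn0 : 0 < n := norm_pos_iff.mpr he
  have hkey : γ * c * n ≤ m := key_ineq γ e hγ
  have hCS : t ^ 2 ≤ n ^ 2 * ‖v‖ ^ 2 := by
    have := abs_real_inner_le_norm e v
    have h2 : t ^ 2 = |t| ^ 2 := (sq_abs t).symm
    rw [h2]
    calc |t| ^ 2 ≤ (n * ‖v‖) ^ 2 := by
          apply pow_le_pow_left₀ (abs_nonneg t) this
      _ = n ^ 2 * ‖v‖ ^ 2 := by ring
  have hQ : ⟪psi jc γ e v, v⟫ =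
      jc * γ / m * ‖v‖ ^ 2 - (γ * c / (m * n)) * (jc * γ / m) * t ^ 2 := by
    simp only [psi, Lam, inner_sub_left, real_inner_smul_left, ← hm, ← hc, ← hn,
      real_inner_self_eq_norm_sq, ← htdef]
    ring
  have hQ' : ⟪psi jc γ e v, v⟫ =
      jc * γ / (m ^ 2 * n) * (m * n * ‖v‖ ^ 2 - γ * c * t ^ 2) := by
    rw [hQ]; field_simp
  have hterm : γ * c * t ^ 2 ≤ m * n * ‖v‖ ^ 2 := by
    calc γ * c * t ^ 2 ≤ γ * c * (n ^ 2 * ‖v‖ ^ 2) := by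
          apply mul_le_mul_of_nonneg_left hCS (by positivity)
      _ = (γ * c * n) * (n * ‖v‖ ^ 2) := by ring
      _ ≤ m * (n * ‖v‖ ^ 2) := by
          apply mul_le_mul_of_nonneg_right hkey (by positivity)
      _ = m * n * ‖v‖ ^ 2 := by ring
  constructor
  · rw [hQ']
    apply mul_nonneg (by positivity)
    linarith
  · rw [hQ']
    have h1 : jc * γ / (m ^ 2 * n) * (m * n * ‖v‖ ^ 2 - γ * c * t ^ 2)
        ≤ jc * γ / (m ^ 2 * n) * (m * n * ‖v‖ ^ 2) := by
      apply mul_le_mul_of_nonneg_left _ (by positivity)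
      nlinarith [mul_nonneg (mul_nonneg hγ.le hc0) (sq_nonneg t)]
    have h2 : jc * γ / (m ^ 2 * n) * (m * n * ‖v‖ ^ 2) = jc * γ * ‖v‖ ^ 2 / m := by
      field_simp
    have h3 : jc * γ * ‖v‖ ^ 2 / m ≤ 2 * jc * γ * ‖v‖ ^ 2 / m := by
      gcongr
      nlinarith [sq_nonneg ‖v‖]
    linarith
end

section
/- Let j_c > 0, γ > 0, and let Ω ⊆ ℝ³ be a Lebesgue-measurable set. For all measurable functions f, g : Ω → ℝ³ with ∫_Ω |f|² dx < ∞ and ∫_Ω |g|² dx < ∞, the superposition x ↦ Λ_γ(f(x)) is square-integrable on Ω, and the composed maps satisfy the L²-Lipschitz estimate (∫_Ω |Λ_γ(f(x)) − Λ_γ(g(x))|² dx)^{1/2} ≤ 2 j_c γ (∫_Ω |f(x) − g(x)|² dx)^{1/2}. -/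
open scoped RealInnerProductSpace Topology

lemma one_le_maxReg {γ : ℝ} (hγ : 0 < γ) (t : ℝ) : 1 ≤ maxReg γ t := by
  have hc : 0 < 1 / (2 * γ) := by positivity
  unfold maxReg
  split_ifs with h1 h2
  · linarith
  · exact le_refl 1
  · nlinarith [sq_nonneg (t - 1 + 1 / (2 * γ))]

lemma le_maxReg {γ : ℝ} (hγ : 0 < γ) (t : ℝ) : t ≤ maxReg γ t := by
  have hc : γ * (1 / (2 * γ)) = 1 / 2 := by field_simp
  have hc0 : 0 < 1 / (2 * γ) := by positivity
  unfold maxReg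
  split_ifs with h1 h2
  · exact le_refl t
  · linarith
  · nlinarith [sq_nonneg (t - 1 - 1 / (2 * γ))]

lemma maxReg_mono {γ : ℝ} (hγ : 0 < γ) {a b : ℝ} (hba : b ≤ a) :
    maxReg γ b ≤ maxReg γ a := by
  have hc : γ * (1 / (2 * γ)) = 1 / 2 := by field_simp
  have hc0 : 0 < 1 / (2 * γ) := by positivity
  unfold maxReg
  split_ifs with h1 h2 h3 h4 h5 h6 h7 h8 <;>
    nlinarith [sq_nonneg (b - 1 + 1 / (2 * γ)), sq_nonneg (a - 1 + 1 / (2 * γ)),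
      sq_nonneg (a - b), mul_nonneg (sub_nonneg.2 hba) hγ.le,
      mul_nonneg (mul_nonneg (sub_nonneg.2 hba) hγ.le) hc0.le]

lemma maxReg_lip_one_side {γ : ℝ} (hγ : 0 < γ) {a b : ℝ} (hba : b ≤ a) :
    maxReg γ a - maxReg γ b ≤ a - b := by
  have hc : γ * (1 / (2 * γ)) = 1 / 2 := by field_simp
  have hc0 : 0 < 1 / (2 * γ) := by positivity
  unfold maxReg
  split_ifs with h1 h2 h3 h4 h5 h6 h7 h8 <;>
    nlinarith [sq_nonneg (b - 1 - 1 / (2 * γ)), sq_nonneg (a - 1 - 1 / (2 * γ)),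
      sq_nonneg (a - b), mul_nonneg (sub_nonneg.2 hba) hγ.le,
      mul_nonneg (mul_nonneg (sub_nonneg.2 hba) hγ.le) hc0.le]

lemma maxReg_lip {γ : ℝ} (hγ : 0 < γ) (a b : ℝ) :
    |maxReg γ a - maxReg γ b| ≤ |a - b| := by
  rcases le_total b a with h | h
  · rw [abs_of_nonneg (sub_nonneg.2 (maxReg_mono hγ h)),
      abs_of_nonneg (sub_nonneg.2 h)]
    exact maxReg_lip_one_side hγ h
  · rw [abs_sub_comm, abs_sub_comm a b,
      abs_of_nonneg (sub_nonneg.2 (maxReg_mono hγ h)),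
      abs_of_nonneg (sub_nonneg.2 h)]
    exact maxReg_lip_one_side hγ h

lemma Lam_norm_le {jc γ : ℝ} (hjc : 0 < jc) (hγ : 0 < γ) (e : E3) :
    ‖Lam jc γ e‖ ≤ jc * γ * ‖e‖ := by
  have hm : 1 ≤ maxReg γ (γ * ‖e‖) := one_le_maxReg hγ _
  have hm0 : 0 < maxReg γ (γ * ‖e‖) := lt_of_lt_of_le one_pos hm
  rw [Lam, norm_smul, Real.norm_eq_abs, abs_of_nonneg (by positivity)]
  gcongr
  calc jc * γ / maxReg γ (γ * ‖e‖) ≤ jc * γ / 1 := by gcongr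
    _ = jc * γ := by ring

lemma Lam_lip {jc γ : ℝ} (hjc : 0 < jc) (hγ : 0 < γ) (e e' : E3) :
    ‖Lam jc γ e - Lam jc γ e'‖ ≤ 2 * jc * γ * ‖e - e'‖ := by
  set m := maxReg γ (γ * ‖e‖) with hmdef
  set m' := maxReg γ (γ * ‖e'‖) with hm'def
  have hm1 : 1 ≤ m := one_le_maxReg hγ _
  have hm'1 : 1 ≤ m' := one_le_maxReg hγ _
  have hm0 : 0 < m := lt_of_lt_of_le one_pos hm1
  have hm'0 : 0 < m' := lt_of_lt_of_le one_pos hm'1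
  have hm'ge : γ * ‖e'‖ ≤ m' := le_maxReg hγ _
  have hdiff : |m - m'| ≤ γ * ‖e - e'‖ := by
    calc |m - m'| ≤ |γ * ‖e‖ - γ * ‖e'‖| := maxReg_lip hγ _ _
      _ = γ * |‖e‖ - ‖e'‖| := by rw [← mul_sub, abs_mul, abs_of_pos hγ]
      _ ≤ γ * ‖e - e'‖ := by gcongr; exact abs_norm_sub_norm_le e e'
  have key : Lam jc γ e - Lam jc γ e' =
      (jc * γ / m) • (e - e') + ((jc * γ / m) - (jc * γ / m')) • e' := by
    rw [Lam, Lam, ← hmdef, ← hm'def]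
    module
  rw [key]
  calc ‖(jc * γ / m) • (e - e') + ((jc * γ / m) - (jc * γ / m')) • e'‖
      ≤ ‖(jc * γ / m) • (e - e')‖ + ‖((jc * γ / m) - (jc * γ / m')) • e'‖ :=
        norm_add_le _ _
    _ = (jc * γ / m) * ‖e - e'‖ + |jc * γ / m - jc * γ / m'| * ‖e'‖ := by
        rw [norm_smul, norm_smul, Real.norm_eq_abs, Real.norm_eq_abs,
          abs_of_nonneg (by positivity)]
    _ ≤ jc * γ * ‖e - e'‖ + jc * γ * ‖e - e'‖ := by
        gcongr ?_ + ?_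
        · have : jc * γ / m ≤ jc * γ := by
            calc jc * γ / m ≤ jc * γ / 1 := by gcongr
              _ = jc * γ := by ring
          exact mul_le_mul_of_nonneg_right this (norm_nonneg _)
        · have heq : jc * γ / m - jc * γ / m' = jc * γ * (m' - m) / (m * m') := by
            field_simp
          rw [heq, abs_div, abs_of_pos (mul_pos hm0 hm'0), abs_mul,
            abs_of_nonneg (by positivity)]
          rw [div_mul_eq_mul_div, div_le_iff₀ (mul_pos hm0 hm'0)]
          have h1 : |m' - m| ≤ γ * ‖e - e'‖ := by rwa [abs_sub_comm]
          have h2 : jc * γ * |m' - m| * ‖e'‖ ≤ jc * γ * (γ * ‖e - e'‖) * ‖e'‖ := by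
            gcongr
          calc jc * γ * |m' - m| * ‖e'‖ ≤ jc * γ * (γ * ‖e - e'‖) * ‖e'‖ := h2
            _ = jc * γ * ‖e - e'‖ * (γ * ‖e'‖) := by ring
            _ ≤ jc * γ * ‖e - e'‖ * m' := by gcongr
            _ ≤ jc * γ * ‖e - e'‖ * (m * m') := by
                nlinarith [mul_nonneg (mul_nonneg (mul_nonneg
                  (mul_nonneg hjc.le hγ.le) (norm_nonneg (e - e'))) hm'0.le)
                  (sub_nonneg.2 hm1)]
    _ = 2 * jc * γ * ‖e - e'‖ := by ring

lemma measurable_maxReg (γ : ℝ) : Measurable (maxReg γ) := by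
  unfold maxReg
  refine Measurable.ite (measurableSet_le measurable_const (by fun_prop))
    measurable_id (Measurable.ite (measurableSet_le (by fun_prop) measurable_const)
    measurable_const (by fun_prop))

lemma measurable_Lam_comp {jc γ : ℝ} {f : E3 → E3} (hf : Measurable f) :
    Measurable (fun x => Lam jc γ (f x)) := by
  unfold Lam
  exact (measurable_const.div
    ((measurable_maxReg γ).comp (measurable_const.mul hf.norm))).smul hf

/-- The superposition `x ↦ Λ_γ(f(x))` is square-integrable on Ω and the composed
maps satisfy the L²-Lipschitz estimate with constant `2 j_c γ`. -/
theorem Lam_superposition_L2_lipschitz (jc γ : ℝ) (hjc : 0 < jc) (hγ : 0 < γ)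
    (Ω : Set E3) (hΩ : MeasurableSet Ω) (f g : E3 → E3)
    (hf : Measurable f) (hg : Measurable g)
    (hf2 : MeasureTheory.IntegrableOn (fun x => ‖f x‖ ^ 2) Ω)
    (hg2 : MeasureTheory.IntegrableOn (fun x => ‖g x‖ ^ 2) Ω) :
    MeasureTheory.IntegrableOn (fun x => ‖Lam jc γ (f x)‖ ^ 2) Ω ∧
    Real.sqrt (∫ x in Ω, ‖Lam jc γ (f x) - Lam jc γ (g x)‖ ^ 2) ≤
      2 * jc * γ * Real.sqrt (∫ x in Ω, ‖f x - g x‖ ^ 2) := by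
  have hLf := measurable_Lam_comp (jc := jc) (γ := γ) hf
  have hLg := measurable_Lam_comp (jc := jc) (γ := γ) hg
  have part1 : MeasureTheory.IntegrableOn (fun x => ‖Lam jc γ (f x)‖ ^ 2) Ω := by
    refine (hf2.const_mul ((jc * γ) ^ 2)).mono
      ((hLf.norm.pow_const 2).aestronglyMeasurable.restrict) ?_
    filter_upwards with x
    have h := Lam_norm_le hjc hγ (f x)
    rw [Real.norm_eq_abs, Real.norm_eq_abs, abs_of_nonneg (by positivity),
      abs_of_nonneg (by positivity)]
    nlinarith [norm_nonneg (Lam jc γ (f x)), norm_nonneg (f x)]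
  refine ⟨part1, ?_⟩
  have hfg2 : MeasureTheory.IntegrableOn (fun x => ‖f x - g x‖ ^ 2) Ω := by
    refine ((hf2.const_mul 2).add (hg2.const_mul 2)).mono
      (((hf.sub hg).norm.pow_const 2).aestronglyMeasurable.restrict) ?_
    filter_upwards with x
    have h := norm_sub_le (f x) (g x)
    simp only [Pi.add_apply]
    rw [Real.norm_eq_abs, Real.norm_eq_abs, abs_of_nonneg (by positivity),
      abs_of_nonneg (by positivity)]
    nlinarith [norm_nonneg (f x), norm_nonneg (g x), sq_nonneg (‖f x‖ - ‖g x‖),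
      mul_le_mul h h (norm_nonneg _) (by positivity)]
  have hptwise : ∀ x, ‖Lam jc γ (f x) - Lam jc γ (g x)‖ ^ 2 ≤
      (2 * jc * γ) ^ 2 * ‖f x - g x‖ ^ 2 := by
    intro x
    have h := Lam_lip hjc hγ (f x) (g x)
    nlinarith [norm_nonneg (Lam jc γ (f x) - Lam jc γ (g x)), norm_nonneg (f x - g x)]
  have hL2 : MeasureTheory.IntegrableOn
      (fun x => ‖Lam jc γ (f x) - Lam jc γ (g x)‖ ^ 2) Ω := by
    refine (hfg2.const_mul ((2 * jc * γ) ^ 2)).mono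
      (((hLf.sub hLg).norm.pow_const 2).aestronglyMeasurable.restrict) ?_
    filter_upwards with x
    rw [Real.norm_eq_abs, Real.norm_eq_abs, abs_of_nonneg (by positivity),
      abs_of_nonneg (by positivity)]
    exact hptwise x
  have hint : (∫ x in Ω, ‖Lam jc γ (f x) - Lam jc γ (g x)‖ ^ 2) ≤
      (2 * jc * γ) ^ 2 * ∫ x in Ω, ‖f x - g x‖ ^ 2 := by
    rw [← MeasureTheory.integral_const_mul]
    exact MeasureTheory.integral_mono hL2 (hfg2.const_mul _) (fun x => hptwise x)
  calc Real.sqrt (∫ x in Ω, ‖Lam jc γ (f x) - Lam jc γ (g x)‖ ^ 2)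
      ≤ Real.sqrt ((2 * jc * γ) ^ 2 * ∫ x in Ω, ‖f x - g x‖ ^ 2) :=
        Real.sqrt_le_sqrt hint
    _ = 2 * jc * γ * Real.sqrt (∫ x in Ω, ‖f x - g x‖ ^ 2) := by
        rw [Real.sqrt_mul (by positivity), Real.sqrt_sq (by positivity)]
end
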